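/- Let λ be a partition of n with λ₁ = λ₂ (largest part repeated at least twice), and let n' = n + 1 − λ₁. Then the unique partition μ' of n' such that ᵗλ and ᵗμ' are 2-transverse is μ' = [λ₂ + 1, λ₃, λ₄, …, λ_k]. -/
import Mathlib


/-- A partition, encoded as a weakly decreasing function `ℕ → ℕ` (0-indexed parts)
that is eventually zero. -/
def IsPartition (f : ℕ → ℕ) : Prop := Antitone f ∧ ∃ N, ∀ i, N ≤ i → f i = 0

/-- The conjugate (transpose) partition: `conj f i = #{j : f j ≥ i+1}` (0-indexed,
so `conj f i` is the (i+1)-st column length, i.e. ᵗλ_{i+1}). -/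
noncomputable def conj (f : ℕ → ℕ) (i : ℕ) : ℕ := Nat.card {j : ℕ // i + 1 ≤ f j}

/-- Two partitions are close if corresponding parts differ by at most 1. -/
def Close (f g : ℕ → ℕ) : Prop := ∀ i, f i ≤ g i + 1 ∧ g i ≤ f i + 1

/-- Two partitions are 2-transverse: they are close and every positive common part
(at equal indices) occurs an even number of times. -/
def Transverse2 (f g : ℕ → ℕ) : Prop :=
  Close f g ∧ ∀ p, 0 < p → Even (Nat.card {i : ℕ // f i = p ∧ g i = p})

/-- The size |λ| of a partition: the (finite) sum of its parts. -/
noncomputable def psize (f : ℕ → ℕ) : ℕ := ∑ᶠ i, f i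

/-- Prepend a part to a partition. -/
def pcons (a : ℕ) (f : ℕ → ℕ) : ℕ → ℕ
  | 0 => a
  | (i+1) => f i

/-- `RemoveTwoHook ν μ` : the partition μ is obtained from ν by removing a 2-hook,
either two adjacent blocks in one row (type (1²)) or two adjacent blocks in one
column (type (2)), the result still being a Young diagram. -/
def RemoveTwoHook (ν μ : ℕ → ℕ) : Prop :=
  IsPartition ν ∧ IsPartition μ ∧
  ((∃ i, μ i + 2 = ν i ∧ ∀ j, j ≠ i → μ j = ν j) ∨
   (∃ i, μ i + 1 = ν i ∧ μ (i+1) + 1 = ν (i+1) ∧ ∀ j, j ≠ i → j ≠ i + 1 → μ j = ν j))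

lemma conj_ncard (f : ℕ → ℕ) (j : ℕ) : conj f j = {k : ℕ | j + 1 ≤ f k}.ncard := by
  rw [conj, ← Nat.card_coe_set_eq]; rfl

lemma conj_le_iff {f : ℕ → ℕ} (hf : IsPartition f) (i j : ℕ) : conj f j ≤ i ↔ f i ≤ j := by
  obtain ⟨ha, N, hN⟩ := hf
  have hfin : {k : ℕ | j + 1 ≤ f k}.Finite := by
    apply (Set.finite_Iio N).subset
    intro k hk
    simp only [Set.mem_setOf_eq] at hk
    simp only [Set.mem_Iio]
    by_contra h
    have := hN k (by omega)
    omega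
  rw [conj_ncard]
  constructor
  · intro h
    by_contra hfi
    have hsub : Set.Iic i ⊆ {k : ℕ | j + 1 ≤ f k} := fun k hk => by
      have : f i ≤ f k := ha hk
      simp only [Set.mem_setOf_eq]; omega
    have := Set.ncard_le_ncard hsub hfin
    rw [← Finset.coe_Iic, Set.ncard_coe_finset, Nat.card_Iic] at this
    omega
  · intro h
    have hsub : {k : ℕ | j + 1 ≤ f k} ⊆ Set.Iio i := fun k hk => by
      simp only [Set.mem_setOf_eq] at hk
      simp only [Set.mem_Iio]
      by_contra hki
      have : f k ≤ f i := ha (by omega)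
      omega
    have := Set.ncard_le_ncard hsub (Set.finite_Iio i)
    rw [← Finset.coe_Iio, Set.ncard_coe_finset, Nat.card_Iio] at this
    omega

lemma conj_eq_of {f : ℕ → ℕ} (hf : IsPartition f) {m j : ℕ} (h1 : f m ≤ j)
    (h2 : ∀ k < m, j + 1 ≤ f k) : conj f j = m := by
  have hle : conj f j ≤ m := (conj_le_iff hf m j).mpr h1
  rcases Nat.eq_zero_or_pos m with rfl | hm
  · omega
  have : ¬ conj f j ≤ m - 1 := by
    rw [conj_le_iff hf]
    have := h2 (m - 1) (by omega)
    omega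
  omega

lemma conj_isPartition {f : ℕ → ℕ} (hf : IsPartition f) : IsPartition (conj f) := by
  constructor
  · intro j' j hj
    rw [conj_le_iff hf]
    have : f (conj f j') ≤ j' := (conj_le_iff hf _ j').mp le_rfl
    omega
  · exact ⟨f 0, fun j hj => Nat.le_zero.mp ((conj_le_iff hf 0 j).mpr (by omega))⟩

lemma conj_conj {f : ℕ → ℕ} (hf : IsPartition f) : conj (conj f) = f := by
  funext j
  have hcc := conj_isPartition hf
  have ha : conj (conj f) j ≤ f j :=
    (conj_le_iff hcc (f j) j).mpr ((conj_le_iff hf j (f j)).mpr le_rfl)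
  have hb : f j ≤ conj (conj f) j := by
    have h1 : conj f (conj (conj f) j) ≤ j :=
      (conj_le_iff hcc (conj (conj f) j) j).mp le_rfl
    exact (conj_le_iff hf j (conj (conj f) j)).mp h1
  omega

lemma psize_eq_sum {f : ℕ → ℕ} {N : ℕ} (h0 : ∀ i, N ≤ i → f i = 0) :
    psize f = ∑ i ∈ Finset.range N, f i := by
  apply finsum_eq_sum_of_support_subset
  intro i hi
  simp only [Function.mem_support] at hi
  simp only [Finset.coe_range, Set.mem_Iio]
  by_contra h
  exact hi (h0 i (by omega))

lemma conj_card_finset {f : ℕ → ℕ} {N : ℕ} (h0 : ∀ i, N ≤ i → f i = 0) (j : ℕ) :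
    conj f j = ((Finset.range N).filter (fun k => j + 1 ≤ f k)).card := by
  rw [conj_ncard, ← Set.ncard_coe_finset]
  congr 1
  ext k
  simp only [Set.mem_setOf_eq, Finset.coe_filter, Finset.mem_range]
  constructor
  · intro hk
    refine ⟨?_, hk⟩
    by_contra h
    have := h0 k (by omega)
    omega
  · exact fun h => h.2

lemma psize_conj {f : ℕ → ℕ} (hf : IsPartition f) : psize (conj f) = psize f := by
  obtain ⟨ha, N, hN⟩ := hf
  have hc0 : ∀ j, f 0 ≤ j → conj f j = 0 := fun j hj =>
    Nat.le_zero.mp ((conj_le_iff ⟨ha, N, hN⟩ 0 j).mpr hj)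
  rw [psize_eq_sum hc0, psize_eq_sum hN]
  have : ∀ j ∈ Finset.range (f 0), conj f j = ((Finset.range N).filter (fun k => j + 1 ≤ f k)).card :=
    fun j _ => conj_card_finset hN j
  rw [Finset.sum_congr rfl this]
  simp only [Finset.card_filter]
  rw [Finset.sum_comm]
  apply Finset.sum_congr rfl
  intro k hk
  have hfk : f k ≤ f 0 := ha (Nat.zero_le k)
  have : (Finset.range (f 0)).filter (fun j => j + 1 ≤ f k) = Finset.range (f k) := by
    ext j; simp only [Finset.mem_filter, Finset.mem_range]; omega
  rw [← Finset.card_filter, this, Finset.card_range]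

/-- If λ₁ = λ₂, the unique partition μ' of n + 1 − λ₁ with ᵗλ and ᵗμ'
2-transverse is μ' = [λ₂+1, λ₃, λ₄, …]. -/
theorem stmt13 (f : ℕ → ℕ) (hf : IsPartition f) (h12 : f 0 = f 1) :
    IsPartition (pcons (f 1 + 1) (fun i => f (i + 2))) ∧
    psize (pcons (f 1 + 1) (fun i => f (i + 2))) + f 0 = psize f + 1 ∧
    Transverse2 (conj f) (conj (pcons (f 1 + 1) (fun i => f (i + 2)))) ∧
    ∀ μ : ℕ → ℕ, IsPartition μ → psize μ + f 0 = psize f + 1 →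
      Transverse2 (conj f) (conj μ) → μ = pcons (f 1 + 1) (fun i => f (i + 2)) := by
  obtain ⟨ha, N, hN⟩ := hf
  have hf : IsPartition f := ⟨ha, N, hN⟩
  set g := pcons (f 1 + 1) (fun i => f (i + 2)) with hgdef
  have hg0 : g 0 = f 1 + 1 := rfl
  have hgs : ∀ i, g (i + 1) = f (i + 2) := fun i => rfl
  have hgpart : IsPartition g := by
    constructor
    · apply antitone_nat_of_succ_le
      rintro (_ | n)
      · show f 2 ≤ f 1 + 1
        have := ha (show (1 : ℕ) ≤ 2 by omega)
        omega
      · show f (n + 3) ≤ f (n + 2)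
        exact ha (by omega)
    · refine ⟨N + 1, ?_⟩
      rintro (_ | i) hi
      · omega
      · show f (i + 2) = 0
        exact hN _ (by omega)
  -- size of g
  have hsizeg : psize g + f 0 = psize f + 1 := by
    have hgz : ∀ i, N + 2 ≤ i → g i = 0 := by
      rintro (_ | i) hi
      · omega
      · show f (i + 2) = 0
        exact hN _ (by omega)
    have hfz : ∀ i, N + 2 ≤ i → f i = 0 := fun i hi => hN i (by omega)
    rw [psize_eq_sum hgz, psize_eq_sum hfz]
    rw [Finset.sum_range_succ' g (N + 1), Finset.sum_range_succ' f (N + 1)]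
    rw [Finset.sum_congr rfl (fun i (_ : i ∈ Finset.range (N + 1)) => hgs i)]
    rw [Finset.sum_range_succ' (fun i => f (i + 1)) N]
    rw [Finset.sum_congr rfl (fun i (_ : i ∈ Finset.range N) => (rfl : f (i + 1 + 1) = f (i + 2)))]
    rw [Finset.sum_range_succ (fun i => f (i + 2)) N]
    have hN2 : f (N + 2) = 0 := hN _ (by omega)
    have e1 : g 0 = f 1 + 1 := rfl
    have e2 : f (0 + 1) = f 1 := rfl
    have e3 : (∑ i ∈ Finset.range N, f (i + 1 + 1)) = ∑ i ∈ Finset.range N, f (i + 2) := rfl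
    omega
  -- values of conj f and conj g
  have hc0 : ∀ j, f 0 ≤ j → conj f j = 0 := fun j hj =>
    conj_eq_of hf (m := 0) hj (by omega)
  have hd_lt : ∀ i, i < f 0 → conj g i + 1 = conj f i := by
    intro i hi
    have hci2 : 2 ≤ conj f i := by
      by_contra h
      have := (conj_le_iff hf 1 i).mp (by omega)
      omega
    have h1 : f (conj f i) ≤ i := (conj_le_iff hf _ i).mp le_rfl
    have h2 : ∀ k, k < conj f i → i + 1 ≤ f k := by
      intro k hk
      by_contra h
      have := (conj_le_iff hf k i).mpr (by omega)
      omega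
    have hcg : conj g i = conj f i - 1 := by
      apply conj_eq_of hgpart
      · have he : conj f i - 1 = (conj f i - 2) + 1 := by omega
        rw [he, hgs]
        have he2 : conj f i - 2 + 2 = conj f i := by omega
        rw [he2]
        exact h1
      · rintro (_ | k) hk
        · rw [hg0]; omega
        · rw [hgs]
          exact h2 (k + 2) (by omega)
    omega
  have hdF : conj g (f 0) = 1 := by
    apply conj_eq_of hgpart (m := 1)
    · show f 2 ≤ f 0
      exact ha (by omega)
    · rintro (_ | k) hk
      · rw [hg0]; omega
      · omega
  have hd_gt : ∀ i, f 0 < i → conj g i = 0 := by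
    intro i hi
    apply conj_eq_of hgpart (m := 0)
    · rw [hg0]; omega
    · omega
  -- transversality
  have htrans : Transverse2 (conj f) (conj g) := by
    constructor
    · intro i
      rcases lt_trichotomy i (f 0) with h | h | h
      · have := hd_lt i h; omega
      · subst h
        have := hc0 (f 0) le_rfl
        omega
      · have := hd_gt i h
        have := hc0 i (by omega)
        omega
    · intro p hp
      have hempty : ∀ i : ℕ, ¬(conj f i = p ∧ conj g i = p) := by
        rintro i ⟨h1, h2⟩
        rcases lt_trichotomy i (f 0) with h | h | h
        · have := hd_lt i h; omega
        · subst h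
          have := hc0 (f 0) le_rfl
          omega
        · have := hc0 i (by omega)
          omega
      have : IsEmpty {i : ℕ // conj f i = p ∧ conj g i = p} :=
        ⟨fun x => hempty x.1 x.2⟩
      rw [Nat.card_of_isEmpty]
      exact Even.zero
  refine ⟨hgpart, hsizeg, htrans, ?_⟩
  -- uniqueness
  intro μ hμ hsize ⟨hclose, heven⟩
  set d := conj μ with hddef
  have hdpart : IsPartition d := conj_isPartition hμ
  have hdz : ∀ j, μ 0 ≤ j → d j = 0 := fun j hj =>
    conj_eq_of hμ (m := 0) hj (by omega)
  set M := f 0 + (μ 0 + 1) with hM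
  have hsum_d : psize μ = ∑ i ∈ Finset.range M, d i := by
    rw [← psize_conj hμ]
    exact psize_eq_sum (fun i hi => hdz i (by omega))
  have hsum_c : psize f = ∑ i ∈ Finset.range M, conj f i := by
    rw [← psize_conj hf]
    exact psize_eq_sum (fun i hi => hc0 i (by omega))
  rw [Finset.sum_range_add] at hsum_d hsum_c
  have hcz : ∑ i ∈ Finset.range (μ 0 + 1), conj f (f 0 + i) = 0 :=
    Finset.sum_eq_zero (fun i _ => hc0 _ (by omega))
  set e : ℕ → ℕ := fun i => d i + 1 - conj f i with hedef
  have hpoint : ∀ i, i < f 0 → d i + 1 = conj f i + e i := by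
    intro i _
    have := (hclose i).1
    simp only [hedef]
    omega
  have hsum_e : ∑ i ∈ Finset.range (f 0), d i + f 0
      = ∑ i ∈ Finset.range (f 0), conj f i + ∑ i ∈ Finset.range (f 0), e i := by
    have h0 : ∑ i ∈ Finset.range (f 0), (d i + 1)
        = ∑ i ∈ Finset.range (f 0), (conj f i + e i) :=
      Finset.sum_congr rfl (fun i hi => hpoint i (Finset.mem_range.mp hi))
    have h1 : ∑ i ∈ Finset.range (f 0), (d i + 1)
        = (∑ i ∈ Finset.range (f 0), d i) + f 0 := by
      rw [Finset.sum_add_distrib, Finset.sum_const, Finset.card_range, smul_eq_mul, mul_one]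
    have h2 : ∑ i ∈ Finset.range (f 0), (conj f i + e i)
        = (∑ i ∈ Finset.range (f 0), conj f i) + ∑ i ∈ Finset.range (f 0), e i :=
      Finset.sum_add_distrib
    omega
  set E := ∑ i ∈ Finset.range (f 0), e i with hE
  set tail := ∑ i ∈ Finset.range (μ 0 + 1), d (f 0 + i) with htail
  have hkey : E + tail = 1 := by omega
  -- rule out E = 1 via parity
  have hE0 : E = 0 := by
    by_contra hE1
    have hE1 : E = 1 := by omega
    obtain ⟨i0, hi0mem, hi0⟩ : ∃ i0 ∈ Finset.range (f 0), e i0 ≠ 0 := by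
      by_contra h
      push_neg at h
      have : E = 0 := Finset.sum_eq_zero h
      omega
    have hsplit : E = e i0 + ∑ i ∈ (Finset.range (f 0)).erase i0, e i :=
      (Finset.add_sum_erase _ _ hi0mem).symm
    have hrest0 : ∑ i ∈ (Finset.range (f 0)).erase i0, e i = 0 := by omega
    have hrest : ∀ j ∈ (Finset.range (f 0)).erase i0, e j = 0 :=
      Finset.sum_eq_zero_iff.mp hrest0
    have hei0 : e i0 = 1 := by omega
    have hi0F : i0 < f 0 := Finset.mem_range.mp hi0mem
    have hdi0 : d i0 = conj f i0 := by
      have := hpoint i0 hi0F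
      omega
    have hci2 : 2 ≤ conj f i0 := by
      by_contra h
      have := (conj_le_iff hf 1 i0).mp (by omega)
      omega
    set p := conj f i0 with hp
    have hset : {i : ℕ | conj f i = p ∧ d i = p} = {i0} := by
      ext i
      simp only [Set.mem_setOf_eq, Set.mem_singleton_iff]
      constructor
      · rintro ⟨h1, h2⟩
        by_contra hne
        rcases lt_or_ge i (f 0) with h | h
        · have hei : e i = 0 :=
            hrest i (Finset.mem_erase.mpr ⟨hne, Finset.mem_range.mpr h⟩)
          have := hpoint i h
          omega
        · have := hc0 i (by omega)
          omega
      · rintro rfl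
        exact ⟨rfl, hdi0.symm ▸ rfl⟩
    have hcard : Nat.card {i : ℕ // conj f i = p ∧ d i = p} = 1 := by
      have h1 : Nat.card {i : ℕ // conj f i = p ∧ d i = p}
          = ({i : ℕ | conj f i = p ∧ d i = p}).ncard := Nat.card_coe_set_eq _
      rw [h1, hset, Set.ncard_singleton]
    have := heven p (by omega)
    rw [hcard] at this
    exact Nat.not_even_one this
  have htail1 : tail = 1 := by omega
  have hall : ∀ i, i < f 0 → d i + 1 = conj f i := by
    intro i hi
    have hei : e i = 0 :=
      Finset.sum_eq_zero_iff.mp hE0 i (Finset.mem_range.mpr hi)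
    have := hpoint i hi
    omega
  have hdF1 : d (f 0) = 1 := by
    have hterm : d (f 0 + 0) ≤ tail := by
      rw [htail]
      exact Finset.single_le_sum (f := fun i => d (f 0 + i))
        (fun i _ => Nat.zero_le _) (Finset.mem_range.mpr (by omega))
    simp only [Nat.add_zero] at hterm
    rcases Nat.eq_zero_or_pos (d (f 0)) with h0 | h1
    · exfalso
      have : tail = 0 := Finset.sum_eq_zero (fun i _ => by
        have : d (f 0 + i) ≤ d (f 0) := hdpart.1 (by omega)
        omega)
      omega
    · omega
  have hdgt : ∀ i, f 0 < i → d i = 0 := by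
    intro i hi
    rcases lt_or_ge i M with him | him
    · have hmem : i - f 0 ∈ (Finset.range (μ 0 + 1)).erase 0 := by
        rw [Finset.mem_erase, Finset.mem_range]
        omega
      have hsplit : tail = d (f 0 + 0) + ∑ j ∈ (Finset.range (μ 0 + 1)).erase 0, d (f 0 + j) :=
        (Finset.add_sum_erase _ (fun j => d (f 0 + j)) (Finset.mem_range.mpr (by omega))).symm
      simp only [Nat.add_zero] at hsplit
      have hrest0 : ∑ j ∈ (Finset.range (μ 0 + 1)).erase 0, d (f 0 + j) = 0 := by omega
      have := Finset.sum_eq_zero_iff.mp hrest0 _ hmem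
      have heq : f 0 + (i - f 0) = i := by omega
      rw [heq] at this
      exact this
    · exact hdz i (by omega)
  have hdg : d = conj g := by
    funext i
    rcases lt_trichotomy i (f 0) with h | h | h
    · have := hall i h
      have := hd_lt i h
      omega
    · subst h
      rw [hdF1, hdF]
    · rw [hdgt i h, hd_gt i h]
  calc μ = conj (conj μ) := (conj_conj hμ).symm
    _ = conj (conj g) := by rw [← hddef, hdg]
    _ = g := conj_conj hgpart
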